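/- Let b > 0, ρ ∈ (−1,1), α ∈ ℝ with α + b√(1−ρ²) > 0 and b(1+ρ) < 2, b(1−ρ) < 2, N(l) = α + b(ρl + √(l²+1)), and μ ∈ ℝ. Define G₁(l) = (1 − N'(l)((l+μ)/(2N(l)) + 1/4))·(1 − N'(l)((l+μ)/(2N(l)) − 1/4)) and G₂(l) = N''(l) − N'(l)²/(2N(l)). Assume both factors of G₁ are positive for every l ∈ ℝ, and let l₁ < 0 < l₂ be the two zeros of G₂ (so G₂ > 0 exactly on (l₁, l₂)). Then σ* := sup_{l ≤ l₁ or l ≥ l₂} (−G₂(l)/(2G₁(l))) is finite, nonnegative and attained at some real point, and for every σ > 0: G₁(l) + G₂(l)/(2σ) ≥ 0 for all l ∈ ℝ if and only if σ ≥ σ*. -/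

import Mathlib

open Filter Topology Real

private lemma sqrt_ineq (ρ l : ℝ) (hρ₁ : -1 < ρ) (hρ₂ : ρ < 1) :
    Real.sqrt (1 - ρ ^ 2) ≤ ρ * l + Real.sqrt (l ^ 2 + 1) := by
  set s := Real.sqrt (1 - ρ ^ 2) with hsdef
  set t := Real.sqrt (l ^ 2 + 1) with htdef
  have hs0 : 0 ≤ s := Real.sqrt_nonneg _
  have hs : s ^ 2 = 1 - ρ ^ 2 := Real.sq_sqrt (by nlinarith)
  have ht0 : 0 ≤ t := Real.sqrt_nonneg _
  have ht : t ^ 2 = l ^ 2 + 1 := Real.sq_sqrt (by positivity)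
  have habs : |l| < t := by
    rw [htdef, show |l| = Real.sqrt (l ^ 2) by rw [Real.sqrt_sq_eq_abs]]
    exact Real.sqrt_lt_sqrt (sq_nonneg l) (by linarith)
  have hρl : ρ * l < t := by
    have h1 := le_abs_self l
    have h2 := neg_abs_le l
    rcases le_or_gt 0 l with h | h
    · nlinarith
    · nlinarith
  have hkey : 0 < t + s - ρ * l := by nlinarith
  nlinarith [sq_nonneg (l * s + ρ)]

private lemma aux_tendsto (b ρ α μ : ℝ) (hb : 0 < b) (hρ₁ : -1 < ρ) (hρ₂ : ρ < 1)
    (hα : 0 < α + b * Real.sqrt (1 - ρ ^ 2)) (h₁ : b * (1 + ρ) < 2)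
    (N N' N'' G₁ G₂ : ℝ → ℝ)
    (hN : ∀ l, N l = α + b * (ρ * l + Real.sqrt (l ^ 2 + 1)))
    (hN' : ∀ l, N' l = b * (ρ + l / Real.sqrt (l ^ 2 + 1)))
    (hN'' : ∀ l, N'' l = b / (l ^ 2 + 1) ^ ((3 : ℝ) / 2))
    (hG₁ : ∀ l, G₁ l = (1 - N' l * ((l + μ) / (2 * N l) + 1 / 4)) *
        (1 - N' l * ((l + μ) / (2 * N l) - 1 / 4)))
    (hG₂ : ∀ l, G₂ l = N'' l - (N' l) ^ 2 / (2 * N l)) :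
    Filter.Tendsto (fun l => -G₂ l / (2 * G₁ l)) Filter.atTop (nhds 0) := by
  have h1ρ : (0:ℝ) < 1 + ρ := by linarith
  have hbρ : (0:ℝ) < b * (ρ + 1) := by nlinarith
  have hNpos : ∀ l, 0 < N l := fun l => by
    rw [hN l]; have := sqrt_ineq ρ l hρ₁ hρ₂; nlinarith
  have tpoly : Tendsto (fun l : ℝ => l ^ 2 + 1) atTop atTop :=
    tendsto_atTop_add_const_right _ 1 (tendsto_pow_atTop two_ne_zero)
  have tsqrtinv : Tendsto (fun l : ℝ => l / Real.sqrt (l ^ 2 + 1)) atTop (nhds 1) := by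
    have hinv : Tendsto (fun l : ℝ => 1 / (l ^ 2 + 1)) atTop (nhds 0) :=
      (tendsto_const_nhds (x := (1:ℝ))).div_atTop tpoly
    have h0 : Tendsto (fun l : ℝ => 1 - 1 / (l ^ 2 + 1)) atTop (nhds 1) := by
      have h := (tendsto_const_nhds (x := (1:ℝ))).sub hinv
      simpa using h
    have h1 : Tendsto (fun l : ℝ => Real.sqrt (1 - 1 / (l ^ 2 + 1))) atTop (nhds 1) := by
      simpa [Function.comp_def] using (Real.continuous_sqrt.tendsto 1).comp h0
    refine h1.congr' ?_
    filter_upwards [eventually_ge_atTop 1] with l hl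
    have hl0 : (0:ℝ) < l := by linarith
    have hpos : (0:ℝ) < l ^ 2 + 1 := by positivity
    rw [show 1 - 1 / (l ^ 2 + 1) = l ^ 2 / (l ^ 2 + 1) by field_simp; ring]
    rw [Real.sqrt_div (sq_nonneg l), Real.sqrt_sq hl0.le]
  have tN' : Tendsto N' atTop (nhds (b * (ρ + 1))) := by
    have h : Tendsto (fun l : ℝ => b * (ρ + l / Real.sqrt (l ^ 2 + 1))) atTop
        (nhds (b * (ρ + 1))) := (tendsto_const_nhds.add tsqrtinv).const_mul b
    exact h.congr fun l => (hN' l).symm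
  have tNtop : Tendsto N atTop atTop := by
    have taff : Tendsto (fun l : ℝ => α + b * (1 + ρ) * l) atTop atTop :=
      tendsto_atTop_add_const_left _ α (Tendsto.const_mul_atTop (by nlinarith) tendsto_id)
    apply tendsto_atTop_mono' atTop ?_ taff
    filter_upwards [eventually_ge_atTop 0] with l hl
    rw [hN l]
    have hts : l ≤ Real.sqrt (l ^ 2 + 1) := by
      nlinarith [Real.sq_sqrt (show (0:ℝ) ≤ l ^ 2 + 1 by positivity),
        Real.sqrt_nonneg (l ^ 2 + 1)]
    nlinarith
  have tinv : Tendsto (fun l : ℝ => Real.sqrt (l ^ 2 + 1) / l) atTop (nhds 1) := by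
    simpa [inv_div] using tsqrtinv.inv₀ one_ne_zero
  have tratio : Tendsto (fun l : ℝ => (l + μ) / (2 * N l)) atTop
      (nhds (1 / (2 * (b * (ρ + 1))))) := by
    have hμ : Tendsto (fun l : ℝ => μ / l) atTop (nhds 0) :=
      (tendsto_const_nhds (x := μ)).div_atTop tendsto_id
    have num : Tendsto (fun l : ℝ => 1 + μ / l) atTop (nhds 1) := by
      have h := (tendsto_const_nhds (x := (1:ℝ))).add hμ
      simpa using h
    have hαl : Tendsto (fun l : ℝ => α / l) atTop (nhds 0) :=
      (tendsto_const_nhds (x := α)).div_atTop tendsto_id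
    have hden1 : Tendsto (fun l : ℝ => α / l + b * (ρ + Real.sqrt (l ^ 2 + 1) / l))
        atTop (nhds (0 + b * (ρ + 1))) :=
      hαl.add (((tendsto_const_nhds (x := ρ)).add tinv).const_mul b)
    have den : Tendsto (fun l : ℝ => 2 * (α / l + b * (ρ + Real.sqrt (l ^ 2 + 1) / l)))
        atTop (nhds (2 * (b * (ρ + 1)))) := by
      have h := hden1.const_mul 2
      rw [zero_add] at h
      exact h
    have h := num.div den (by nlinarith : (2 : ℝ) * (b * (ρ + 1)) ≠ 0)
    refine h.congr' ?_
    filter_upwards [eventually_ge_atTop 1] with l hl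
    have hl0 : (0:ℝ) < l := by linarith
    have hNl : (0:ℝ) < α + b * (ρ * l + Real.sqrt (l ^ 2 + 1)) := by
      have := hNpos l; rwa [hN l] at this
    simp only [Pi.div_apply]
    rw [hN l]
    field_simp [hl0.ne', hNl.ne']
  have trpow : Tendsto (fun l : ℝ => (l ^ 2 + 1) ^ ((3:ℝ)/2)) atTop atTop :=
    (tendsto_rpow_atTop (by norm_num)).comp tpoly
  have tN'' : Tendsto N'' atTop (nhds 0) := by
    have h := (tendsto_const_nhds (x := b)).div_atTop trpow
    exact h.congr fun l => (hN'' l).symm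
  have tG₂ : Tendsto G₂ atTop (nhds 0) := by
    have h2N : Tendsto (fun l => 2 * N l) atTop atTop :=
      Tendsto.const_mul_atTop (by norm_num : (0:ℝ) < 2) tNtop
    have h := tN''.sub ((tN'.pow 2).div_atTop h2N)
    have h' := h.congr fun l => (hG₂ l).symm
    simpa using h'
  have tplus : Tendsto (fun l => 1 - N' l * ((l + μ) / (2 * N l) + 1 / 4)) atTop
      (nhds (1 - b * (ρ + 1) * (1 / (2 * (b * (ρ + 1))) + 1 / 4))) :=
    tendsto_const_nhds.sub (tN'.mul (tratio.add tendsto_const_nhds))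
  have tminus : Tendsto (fun l => 1 - N' l * ((l + μ) / (2 * N l) - 1 / 4)) atTop
      (nhds (1 - b * (ρ + 1) * (1 / (2 * (b * (ρ + 1))) - 1 / 4))) :=
    tendsto_const_nhds.sub (tN'.mul (tratio.sub tendsto_const_nhds))
  have tG₁ : Tendsto G₁ atTop (nhds ((1 - b * (ρ + 1) * (1 / (2 * (b * (ρ + 1))) + 1 / 4)) *
      (1 - b * (ρ + 1) * (1 / (2 * (b * (ρ + 1))) - 1 / 4)))) :=
    (tplus.mul tminus).congr fun l => (hG₁ l).symm
  have hc : b * (ρ + 1) * (1 / (2 * (b * (ρ + 1)))) = 1 / 2 := by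
    rw [mul_one_div, div_eq_div_iff (by positivity) (by norm_num)]
    ring
  have hL : (0:ℝ) < (1 - b * (ρ + 1) * (1 / (2 * (b * (ρ + 1))) + 1 / 4)) *
      (1 - b * (ρ + 1) * (1 / (2 * (b * (ρ + 1))) - 1 / 4)) := by
    have e1 : 1 - b * (ρ + 1) * (1 / (2 * (b * (ρ + 1))) + 1 / 4)
        = 1 / 2 - b * (ρ + 1) / 4 := by rw [mul_add, hc]; ring
    have e2 : 1 - b * (ρ + 1) * (1 / (2 * (b * (ρ + 1))) - 1 / 4)
        = 1 / 2 + b * (ρ + 1) / 4 := by rw [mul_sub, hc]; ring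
    rw [e1, e2]
    nlinarith
  have hfinal := (tG₂.neg).div (tG₁.const_mul 2) (by positivity)
  simpa [Pi.div_def] using hfinal


/-- under the Fukasawa conditions, the threshold
`σ* = sup_{l ≤ l₁ ∨ l ≥ l₂} (−G₂(l)/(2G₁(l)))` is nonnegative and attained,
and for every `σ > 0` the Durrleman function `G₁ + G₂/(2σ)` is nonnegative on
`ℝ` if and only if `σ ≥ σ*`. -/
theorem sigma_star_characterization
    (b ρ α μ : ℝ) (hb : 0 < b) (hρ₁ : -1 < ρ) (hρ₂ : ρ < 1)
    (hα : 0 < α + b * Real.sqrt (1 - ρ ^ 2))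
    (h₁ : b * (1 + ρ) < 2) (h₂ : b * (1 - ρ) < 2)
    (N N' N'' G₁ G₂ : ℝ → ℝ)
    (hN : ∀ l, N l = α + b * (ρ * l + Real.sqrt (l ^ 2 + 1)))
    (hN' : ∀ l, N' l = b * (ρ + l / Real.sqrt (l ^ 2 + 1)))
    (hN'' : ∀ l, N'' l = b / (l ^ 2 + 1) ^ ((3 : ℝ) / 2))
    (hG₁ : ∀ l, G₁ l =
        (1 - N' l * ((l + μ) / (2 * N l) + 1 / 4)) *
        (1 - N' l * ((l + μ) / (2 * N l) - 1 / 4)))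
    (hG₂ : ∀ l, G₂ l = N'' l - (N' l) ^ 2 / (2 * N l))
    (hfp : ∀ l, 0 < 1 - N' l * ((l + μ) / (2 * N l) + 1 / 4))
    (hfm : ∀ l, 0 < 1 - N' l * ((l + μ) / (2 * N l) - 1 / 4))
    (l₁ l₂ : ℝ) (hl₁ : l₁ < 0) (hl₂ : 0 < l₂)
    (hz₁ : G₂ l₁ = 0) (hz₂ : G₂ l₂ = 0)
    (hpos : ∀ l, 0 < G₂ l ↔ l₁ < l ∧ l < l₂)
    (σstar : ℝ)
    (hσstar : σstar =
      sSup ((fun l => -G₂ l / (2 * G₁ l)) '' {l : ℝ | l ≤ l₁ ∨ l₂ ≤ l})) :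
    (∃ l₀ : ℝ, (l₀ ≤ l₁ ∨ l₂ ≤ l₀) ∧ -G₂ l₀ / (2 * G₁ l₀) = σstar) ∧
    0 ≤ σstar ∧
    ∀ σ : ℝ, 0 < σ →
      ((∀ l : ℝ, 0 ≤ G₁ l + G₂ l / (2 * σ)) ↔ σstar ≤ σ) := by
  have hsqrt_pos : ∀ l : ℝ, 0 < Real.sqrt (l ^ 2 + 1) :=
    fun l => Real.sqrt_pos.mpr (by positivity)
  have hNpos : ∀ l, 0 < N l := fun l => by
    rw [hN l]; have := sqrt_ineq ρ l hρ₁ hρ₂; nlinarith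
  have hG1pos : ∀ l, 0 < G₁ l := fun l => by
    rw [hG₁ l]; exact mul_pos (hfp l) (hfm l)
  set S : Set ℝ := {l : ℝ | l ≤ l₁ ∨ l₂ ≤ l} with hS
  set f : ℝ → ℝ := fun l => -G₂ l / (2 * G₁ l) with hf
  have hSl₁ : l₁ ∈ S := Or.inl le_rfl
  have hG2le : ∀ l ∈ S, G₂ l ≤ 0 := by
    intro l hl
    by_contra h
    push_neg at h
    obtain ⟨ha, hb'⟩ := (hpos l).1 h
    rcases hl with h' | h' <;> linarith
  have hfnn : ∀ l ∈ S, 0 ≤ f l := by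
    intro l hl
    exact div_nonneg (by linarith [hG2le l hl]) (by linarith [hG1pos l])
  have hfl₁ : f l₁ = 0 := by rw [hf]; simp only []; rw [hz₁]; simp
  -- continuity
  have contsqrt : Continuous fun l : ℝ => Real.sqrt (l ^ 2 + 1) :=
    Real.continuous_sqrt.comp (by continuity)
  have contN : Continuous N := by
    rw [show N = fun l => α + b * (ρ * l + Real.sqrt (l ^ 2 + 1)) from funext hN]
    exact continuous_const.add
      (continuous_const.mul ((continuous_const.mul continuous_id).add contsqrt))
  have contN' : Continuous N' := by
    rw [show N' = fun l => b * (ρ + l / Real.sqrt (l ^ 2 + 1)) from funext hN']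
    exact continuous_const.mul (continuous_const.add
      (continuous_id.div contsqrt fun l => (hsqrt_pos l).ne'))
  have contN'' : Continuous N'' := by
    rw [show N'' = fun l => b / (l ^ 2 + 1) ^ ((3:ℝ)/2) from funext hN'']
    refine continuous_const.div
      (Continuous.rpow_const ((continuous_pow 2).add continuous_const)
        fun l => Or.inl (by positivity)) fun l => ?_
    exact (Real.rpow_pos_of_pos (by positivity) _).ne'
  have h2Nne : ∀ l : ℝ, 2 * N l ≠ 0 := fun l => by have := hNpos l; positivity
  have contratio : Continuous fun l : ℝ => (l + μ) / (2 * N l) :=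
    (continuous_id.add continuous_const).div (continuous_const.mul contN) h2Nne
  have contG₁ : Continuous G₁ := by
    rw [show G₁ = fun l => (1 - N' l * ((l + μ) / (2 * N l) + 1 / 4)) *
        (1 - N' l * ((l + μ) / (2 * N l) - 1 / 4)) from funext hG₁]
    exact (continuous_const.sub (contN'.mul (contratio.add continuous_const))).mul
      (continuous_const.sub (contN'.mul (contratio.sub continuous_const)))
  have contG₂ : Continuous G₂ := by
    rw [show G₂ = fun l => N'' l - (N' l) ^ 2 / (2 * N l) from funext hG₂]
    exact contN''.sub ((contN'.pow 2).div (continuous_const.mul contN) h2Nne)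
  have contf : Continuous f := by
    rw [hf]
    exact contG₂.neg.div (continuous_const.mul contG₁)
      fun l => by have := hG1pos l; positivity
  -- limits at ±∞
  have ttop : Filter.Tendsto f Filter.atTop (nhds 0) := by
    rw [hf]
    exact aux_tendsto b ρ α μ hb hρ₁ hρ₂ hα h₁ N N' N'' G₁ G₂ hN hN' hN'' hG₁ hG₂
  have tbot : Filter.Tendsto f Filter.atBot (nhds 0) := by
    have hα' : 0 < α + b * Real.sqrt (1 - (-ρ) ^ 2) := by
      rw [show 1 - (-ρ) ^ 2 = 1 - ρ ^ 2 by ring]; exact hα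
    have h₁' : b * (1 + -ρ) < 2 := by rw [show (1 + -ρ) = 1 - ρ by ring]; exact h₂
    have haux := aux_tendsto b (-ρ) α (-μ) hb (by linarith) (by linarith) hα' h₁'
      (fun l => N (-l)) (fun l => -N' (-l)) (fun l => N'' (-l))
      (fun l => G₁ (-l)) (fun l => G₂ (-l))
      (fun l => by beta_reduce; rw [hN (-l), show ((-l) ^ 2 : ℝ) = l ^ 2 by ring]; ring)
      (fun l => by beta_reduce; rw [hN' (-l), show ((-l) ^ 2 : ℝ) = l ^ 2 by ring]; ring)
      (fun l => by beta_reduce; rw [hN'' (-l), show ((-l) ^ 2 : ℝ) = l ^ 2 by ring])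
      (fun l => by beta_reduce; rw [hG₁ (-l)]; ring)
      (fun l => by beta_reduce; rw [hG₂ (-l)]; ring)
    have hcomp := haux.comp (tendsto_neg_atBot_atTop (G := ℝ))
    rw [hf]
    refine hcomp.congr fun l => ?_
    simp [Function.comp]
  -- the main estimate
  have claim : ∀ ε : ℝ, 0 < ε → ∃ x₀ ∈ S, ∀ l ∈ S, f l ≤ max (f x₀) ε := by
    intro ε hε
    obtain ⟨Rt, hRt⟩ := Filter.eventually_atTop.mp (ttop.eventually_lt_const hε)
    obtain ⟨Rb, hRb⟩ := Filter.eventually_atBot.mp (tbot.eventually_lt_const hε)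
    have hSclosed : IsClosed S := by
      have hSe : S = Set.Iic l₁ ∪ Set.Ici l₂ := rfl
      rw [hSe]
      exact isClosed_Iic.union isClosed_Ici
    have hK : IsCompact (S ∩ Set.Icc (min Rb l₁) (max Rt l₁)) :=
      isCompact_Icc.inter_left hSclosed
    have hKne : (S ∩ Set.Icc (min Rb l₁) (max Rt l₁)).Nonempty :=
      ⟨l₁, hSl₁, ⟨min_le_right _ _, le_max_right _ _⟩⟩
    obtain ⟨x₀, hx₀K, hmax⟩ := hK.exists_isMaxOn hKne contf.continuousOn
    refine ⟨x₀, hx₀K.1, fun l hl => ?_⟩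
    by_cases hmem : l ∈ Set.Icc (min Rb l₁) (max Rt l₁)
    · exact le_max_of_le_left (hmax ⟨hl, hmem⟩)
    · rw [Set.mem_Icc] at hmem
      rcases lt_or_ge l (min Rb l₁) with hcase | hcase
      · exact le_max_of_le_right
          (hRb l (le_of_lt (lt_of_lt_of_le hcase (min_le_left _ _)))).le
      · have hgt : ¬ l ≤ max Rt l₁ := fun hc => hmem ⟨hcase, hc⟩
        push_neg at hgt
        exact le_max_of_le_right
          (hRt l (le_of_lt (lt_of_le_of_lt (le_max_left _ _) hgt))).le
  obtain ⟨x₁', hx₁'S, hx₁'⟩ := claim 1 one_pos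
  have bdd : BddAbove (f '' S) := ⟨max (f x₁') 1, by
    rintro y ⟨l, hl, rfl⟩; exact hx₁' l hl⟩
  have hub : ∀ l ∈ S, f l ≤ σstar := by
    intro l hl
    rw [hσstar]
    exact le_csSup bdd ⟨l, hl, rfl⟩
  have hσnn : 0 ≤ σstar := by
    have h := hub l₁ hSl₁
    rwa [hfl₁] at h
  have hattain : ∃ l₀ : ℝ, (l₀ ≤ l₁ ∨ l₂ ≤ l₀) ∧ -G₂ l₀ / (2 * G₁ l₀) = σstar := by
    rcases eq_or_lt_of_le hσnn with h0 | hσpos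
    · refine ⟨l₁, Or.inl le_rfl, ?_⟩
      have : -G₂ l₁ / (2 * G₁ l₁) = f l₁ := rfl
      rw [this, hfl₁, ← h0]
    · obtain ⟨x₀, hx₀S, hx₀⟩ := claim (σstar / 2) (by linarith)
      have h1 : σstar ≤ max (f x₀) (σstar / 2) := by
        have h1' : sSup (f '' S) ≤ max (f x₀) (σstar / 2) := by
          apply Real.sSup_le
          · rintro y ⟨l, hl, rfl⟩; exact hx₀ l hl
          · exact le_trans (hfnn x₀ hx₀S) (le_max_left _ _)
        rw [← hσstar] at h1'
        exact h1'
      have h2 : σstar ≤ f x₀ := by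
        rcases max_cases (f x₀) (σstar / 2) with ⟨he, _⟩ | ⟨he, _⟩
        · rwa [he] at h1
        · rw [he] at h1; linarith
      exact ⟨x₀, hx₀S, le_antisymm (hub x₀ hx₀S) h2⟩
  have key : ∀ σ l : ℝ, 0 < σ → (0 ≤ G₁ l + G₂ l / (2 * σ) ↔ -G₂ l / (2 * G₁ l) ≤ σ) := by
    intro σ l hσ
    have hg := hG1pos l
    have h2σ : (0:ℝ) < 2 * σ := by linarith
    have h2g : (0:ℝ) < 2 * G₁ l := by linarith
    rw [show G₁ l + G₂ l / (2 * σ) = (2 * σ * G₁ l + G₂ l) / (2 * σ) by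
      field_simp]
    rw [le_div_iff₀ h2σ, zero_mul, div_le_iff₀ h2g]
    constructor <;> intro h <;> nlinarith
  refine ⟨hattain, hσnn, fun σ hσ => ⟨fun h => ?_, fun h l => ?_⟩⟩
  · rw [hσstar]
    apply Real.sSup_le
    · rintro y ⟨l, hl, rfl⟩
      exact (key σ l hσ).1 (h l)
    · exact hσ.le
  · by_cases hl : l ∈ S
    · exact (key σ l hσ).2 (le_trans (hub l hl) h)
    · have hmem : l₁ < l ∧ l < l₂ := by
        simp only [hS, Set.mem_setOf_eq] at hl
        push_neg at hl
        exact ⟨hl.1, hl.2⟩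
      have hg2 : 0 < G₂ l := (hpos l).2 hmem
      have hdiv : 0 < G₂ l / (2 * σ) := div_pos hg2 (by linarith)
      linarith [hG1pos l]
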